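/- Let A be a C*-algebra, E a right Hilbert A-module, F ⊆ E a closed submodule, φ : A → B(H₁) completely positive, and suppose Φ : F → B(H₁, H₂) is a non-degenerate φ-map admitting a φ-map extension Ψ : E → B(H₁, H₂). Then every φ-map Θ : F → B(H₁, K) (K any Hilbert space) admits a φ-map extension Θ' : E → B(H₁, K). -/

import Mathlib

open scoped ComplexOrder RightActions Matrix

/-- The `B(H₁)`-valued inner product `⟪T, S⟫ = T* S` on `B(H₁, H₂)`. -/
noncomputable def opInner {H₁ H₂ : Type*} [NormedAddCommGroup H₁] [InnerProductSpace ℂ H₁]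
    [CompleteSpace H₁] [NormedAddCommGroup H₂] [InnerProductSpace ℂ H₂] [CompleteSpace H₂]
    (T S : H₁ →L[ℂ] H₂) : H₁ →L[ℂ] H₁ :=
  (ContinuousLinearMap.adjoint T).comp S

/-- A matrix over a (C*-)algebra is positive iff it factors as `Nᴴ * N`. -/
def MatIsPos {R : Type*} [NonUnitalSemiring R] [StarRing R] {n : ℕ}
    (M : Matrix (Fin n) (Fin n) R) : Prop :=
  ∃ N : Matrix (Fin n) (Fin n) R, M = Nᴴ * N

/-- A linear map between C*-algebras is completely positive if all of its matrix
amplifications preserve positivity. -/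
def IsCompletelyPositive {A B : Type*} [NonUnitalSemiring A] [StarRing A] [Module ℂ A]
    [NonUnitalSemiring B] [StarRing B] [Module ℂ B] (φ : A →ₗ[ℂ] B) : Prop :=
  ∀ (n : ℕ) (M : Matrix (Fin n) (Fin n) A), MatIsPos M → MatIsPos (M.map φ)

/-- The Hilbert C⋆-module class of the older Mathlib (right `A`-action via `Aᵐᵒᵖ`), restated
here because Mathlib's `CStarModule` now uses a left action `SMul A E`. -/
class CStarModuleRight (A : outParam <| Type*) (E : Type*) [NonUnitalSemiring A] [StarRing A]
    [Module ℂ A] [AddCommGroup E] [Module ℂ E] [PartialOrder A] [SMul Aᵐᵒᵖ E] [Norm A] [Norm E]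
    extends Inner A E where
  inner_add_right {x} {y} {z} : inner x (y + z) = inner x y + inner x z
  inner_self_nonneg {x} : 0 ≤ inner x x
  inner_self {x} : inner x x = 0 ↔ x = 0
  inner_op_smul_right {a : A} {x y : E} : inner x (y <• a) = inner x y * a
  inner_smul_right_complex {z : ℂ} {x} {y} : inner x (z • y) = z • inner x y
  star_inner x y : star (inner x y) = inner y x
  norm_eq_sqrt_norm_inner_self x : ‖x‖ = √‖inner x x‖

/-- **Lemma (ii): extendability of one non-degenerate φ-map implies extendability
of all operator-valued φ-maps on `F`.**
If some non-degenerate `φ`-map `Φ : F → B(H₁, H₂)` admits a `φ`-map extension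
`Ψ : E → B(H₁, H₂)`, then every `φ`-map `Θ : F → B(H₁, K)` admits a `φ`-map
extension `Θ' : E → B(H₁, K)`. -/
theorem every_phiMap_extends_of_nondegenerate_extension
    {A : Type*} [NonUnitalCStarAlgebra A] [PartialOrder A] [StarOrderedRing A]
    {E : Type*} [NormedAddCommGroup E] [NormedSpace ℂ E] [SMul Aᵐᵒᵖ E]
    [CStarModuleRight A E] [CompleteSpace E]
    {H₁ H₂ K : Type*} [NormedAddCommGroup H₁] [InnerProductSpace ℂ H₁] [CompleteSpace H₁]
    [NormedAddCommGroup H₂] [InnerProductSpace ℂ H₂] [CompleteSpace H₂]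
    [NormedAddCommGroup K] [InnerProductSpace ℂ K] [CompleteSpace K]
    (F : Submodule ℂ E) (hFclosed : IsClosed (F : Set E))
    (hFmod : ∀ (a : A) (x : E), x ∈ F → x <• a ∈ F)
    (φ : A →ₗ[ℂ] (H₁ →L[ℂ] H₁)) (hφ : IsCompletelyPositive φ)
    (Φ : F → (H₁ →L[ℂ] H₂))
    (hΦmap : ∀ x y : F, opInner (Φ x) (Φ y) = φ (inner A (x : E) (y : E)))
    (hnd : Dense (↑(Submodule.span ℂ {v : H₂ | ∃ (x : F) (h : H₁), v = Φ x h}) : Set H₂))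
    (Ψ : E → (H₁ →L[ℂ] H₂))
    (hext : ∀ x : F, Ψ x = Φ x)
    (hΨmap : ∀ x y : E, opInner (Ψ x) (Ψ y) = φ (inner A x y))
    (Θ : F → (H₁ →L[ℂ] K))
    (hΘmap : ∀ x y : F, opInner (Θ x) (Θ y) = φ (inner A (x : E) (y : E))) :
    ∃ Θ' : E → (H₁ →L[ℂ] K),
      (∀ x : F, Θ' x = Θ x) ∧
      (∀ x y : E, opInner (Θ' x) (Θ' y) = φ (inner A x y)) := by
  classical
  set SΦ : Set H₂ := {v : H₂ | ∃ (x : F) (h : H₁), v = Φ x h} with hSΦdef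
  -- key inner ℂ product identity between Θ and Φ
  have key : ∀ (x y : F) (h h' : H₁),
      (inner ℂ (Θ x h) (Θ y h') : ℂ) = inner ℂ (Φ x h) (Φ y h') := by
    intro x y h h'
    have h1 : opInner (Θ x) (Θ y) = opInner (Φ x) (Φ y) := by
      rw [hΘmap, hΦmap]
    have h2 : ContinuousLinearMap.adjoint (Θ x) (Θ y h')
        = ContinuousLinearMap.adjoint (Φ x) (Φ y h') := by
      have := congrArg (fun T : H₁ →L[ℂ] H₁ => T h') h1
      simpa [opInner] using this
    calc (inner ℂ (Θ x h) (Θ y h') : ℂ)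
        = inner ℂ h (ContinuousLinearMap.adjoint (Θ x) (Θ y h')) :=
          (ContinuousLinearMap.adjoint_inner_right (Θ x) h (Θ y h')).symm
      _ = inner ℂ h (ContinuousLinearMap.adjoint (Φ x) (Φ y h')) := by rw [h2]
      _ = inner ℂ (Φ x h) (Φ y h') :=
          ContinuousLinearMap.adjoint_inner_right (Φ x) h (Φ y h')
  -- choice of representation for generators
  choose gx gh hgeq using fun v : SΦ => (v.2 : ∃ (x : F) (h : H₁), (v : H₂) = Φ x h)
  set g : SΦ → K := fun v => Θ (gx v) (gh v) with hgdef
  have gkey : ∀ v w : SΦ, (inner ℂ (g v) (g w) : ℂ) = inner ℂ (v : H₂) (w : H₂) := by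
    intro v w
    rw [hgdef]
    simp only
    rw [key, ← hgeq, ← hgeq]
  set T : (SΦ →₀ ℂ) →ₗ[ℂ] H₂ := Finsupp.linearCombination ℂ (fun v : SΦ => (v : H₂)) with hTdef
  set U : (SΦ →₀ ℂ) →ₗ[ℂ] K := Finsupp.linearCombination ℂ g with hUdef
  have hTU : ∀ c d : (SΦ →₀ ℂ), (inner ℂ (U c) (U d) : ℂ) = inner ℂ (T c) (T d) := by
    intro c d
    rw [hTdef, hUdef]
    simp only [Finsupp.linearCombination_apply, Finsupp.sum, sum_inner, inner_sum,
      inner_smul_left, inner_smul_right, gkey]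
  have hUwd : ∀ c d : (SΦ →₀ ℂ), T c = T d → U c = U d := by
    intro c d h
    have h0 : (inner ℂ (U (c - d)) (U (c - d)) : ℂ) = 0 := by
      rw [hTU, map_sub, h, sub_self, inner_zero_left]
    have h1 : U (c - d) = 0 := inner_self_eq_zero.mp h0
    rw [map_sub] at h1
    exact sub_eq_zero.mp h1
  set V : Submodule ℂ H₂ := Submodule.span ℂ SΦ with hVdef
  have hVrange : ∀ v : V, ∃ c : (SΦ →₀ ℂ), T c = (v : H₂) := by
    intro v
    have hv : (v : H₂) ∈ LinearMap.range
        (Finsupp.linearCombination ℂ (fun v : SΦ => (v : H₂))) := by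
      rw [← Finsupp.span_eq_range_linearCombination]
      exact v.2
    exact hv
  choose rep hrep using hVrange
  set f : V → K := fun v => U (rep v) with hfdef
  have hfT : ∀ (c : (SΦ →₀ ℂ)) (v : V), (v : H₂) = T c → f v = U c := by
    intro c v hv
    exact hUwd _ _ (by rw [hrep v, hv])
  have hfadd : ∀ v w : V, f (v + w) = f v + f w := by
    intro v w
    have : ((v + w : V) : H₂) = T (rep v + rep w) := by
      rw [map_add, hrep, hrep]; rfl
    rw [hfT _ _ this, map_add]
  have hfsmul : ∀ (a : ℂ) (v : V), f (a • v) = a • f v := by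
    intro a v
    have : ((a • v : V) : H₂) = T (a • rep v) := by
      rw [map_smul, hrep]; rfl
    rw [hfT _ _ this, map_smul]
  have hfinner : ∀ v w : V, (inner ℂ (f v) (f w) : ℂ) = inner ℂ (v : H₂) (w : H₂) := by
    intro v w
    rw [hfdef]
    simp only
    rw [hTU, hrep, hrep]
  have hfnorm : ∀ v : V, ‖f v‖ = ‖(v : H₂)‖ := by
    intro v
    have h1 := hfinner v v
    rw [inner_self_eq_norm_sq_to_K, inner_self_eq_norm_sq_to_K] at h1
    have h2 : ‖f v‖ ^ 2 = ‖(v : H₂)‖ ^ 2 := by exact_mod_cast h1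
    nlinarith [norm_nonneg (f v), norm_nonneg ((v : H₂))]
  -- the continuous linear map on V
  set f₀ : V →ₗ[ℂ] K :=
    { toFun := f, map_add' := hfadd, map_smul' := hfsmul } with hf₀def
  set fc : V →L[ℂ] K := LinearMap.mkContinuous f₀ 1
    (fun v => by rw [one_mul]; exact le_of_eq (hfnorm v)) with hfcdef
  have hdr : DenseRange (V.subtypeL : V →L[ℂ] H₂) := by
    have hr : Set.range ((V.subtypeL : V →L[ℂ] H₂) : V → H₂) = (V : Set H₂) :=
      Subtype.range_coe
    rw [DenseRange, hr]
    exact hnd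
  have hui : IsUniformInducing ((V.subtypeL : V →L[ℂ] H₂) : V → H₂) :=
    isUniformEmbedding_subtype_val.isUniformInducing
  set S : H₂ →L[ℂ] K := fc.extend V.subtypeL with hSdef
  have hSv : ∀ v : V, S (v : H₂) = f v := fun v =>
    ContinuousLinearMap.extend_eq (f := fc) (e := V.subtypeL) hdr hui v
  have hSnorm : ∀ u : H₂, ‖S u‖ = ‖u‖ := by
    have hcont1 : Continuous fun u : H₂ => ‖S u‖ := S.continuous.norm
    have hcont2 : Continuous fun u : H₂ => ‖u‖ := continuous_norm
    have heq : Set.EqOn (fun u : H₂ => ‖S u‖) (fun u : H₂ => ‖u‖) (V : Set H₂) := by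
      intro u hu
      simp only
      rw [show u = ((⟨u, hu⟩ : V) : H₂) from rfl, hSv, hfnorm]
    exact fun u => congrFun (Continuous.ext_on hnd hcont1 hcont2 heq) u
  set SI : H₂ →ₗᵢ[ℂ] K := ⟨S.toLinearMap, hSnorm⟩ with hSIdef
  have hSinner : ∀ u w : H₂, (inner ℂ (S u) (S w) : ℂ) = inner ℂ u w := fun u w =>
    SI.inner_map_map u w
  -- well-definedness of Θ on values of Φ
  have hwd : ∀ (x x' : F) (h h' : H₁), Φ x h = Φ x' h' → Θ x h = Θ x' h' := by
    intro x x' h h' heq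
    have h0 : (inner ℂ (Θ x h - Θ x' h') (Θ x h - Θ x' h') : ℂ)
        = inner ℂ (Φ x h - Φ x' h') (Φ x h - Φ x' h') := by
      simp only [inner_sub_left, inner_sub_right, key]
    rw [heq, sub_self, inner_zero_left] at h0
    exact sub_eq_zero.mp (inner_self_eq_zero.mp h0)
  -- S agrees with Θ on generators
  have hgen : ∀ (x : F) (h : H₁), S (Φ x h) = Θ x h := by
    intro x h
    have hmem : Φ x h ∈ SΦ := ⟨x, h, rfl⟩
    have hmemV : Φ x h ∈ V := Submodule.subset_span hmem
    have h1 : S (Φ x h) = f ⟨Φ x h, hmemV⟩ := hSv ⟨Φ x h, hmemV⟩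
    have h2 : ((⟨Φ x h, hmemV⟩ : V) : H₂)
        = T (Finsupp.single (⟨Φ x h, hmem⟩ : SΦ) (1 : ℂ)) := by
      rw [hTdef, Finsupp.linearCombination_single, one_smul]
    have h3 : U (Finsupp.single (⟨Φ x h, hmem⟩ : SΦ) (1 : ℂ))
        = g ⟨Φ x h, hmem⟩ := by
      rw [hUdef, Finsupp.linearCombination_single, one_smul]
    rw [h1, hfT _ _ h2, h3, hgdef]
    exact hwd _ _ _ _ (hgeq ⟨Φ x h, hmem⟩).symm
  -- the extension
  refine ⟨fun x => S.comp (Ψ x), ?_, ?_⟩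
  · intro x
    ext h
    simp only [ContinuousLinearMap.comp_apply]
    rw [hext x]
    exact hgen x h
  · intro x y
    have hxy := hΨmap x y
    apply ContinuousLinearMap.ext
    intro h'
    apply ext_inner_left ℂ
    intro h
    have e1 : (inner ℂ h ((opInner (S.comp (Ψ x)) (S.comp (Ψ y))) h') : ℂ)
        = inner ℂ (S (Ψ x h)) (S (Ψ y h')) :=
      ContinuousLinearMap.adjoint_inner_right (S.comp (Ψ x)) h ((S.comp (Ψ y)) h')
    have e2 : (inner ℂ h ((opInner (Ψ x) (Ψ y)) h') : ℂ) = inner ℂ (Ψ x h) (Ψ y h') :=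
      ContinuousLinearMap.adjoint_inner_right (Ψ x) h ((Ψ y) h')
    rw [e1, hSinner, ← e2, hxy]
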